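/- Fix 0 ≤ a ≤ 1, 0 ≤ c < 1 with a ≠ c, and define f(t) = ρ(a,t,c) for t ∈ [0,1]. Then f(c) = 1, f(a) = 0, f is continuous on [0,1], strictly decreasing on (0,a), and strictly increasing on (a,1). -/

import Mathlib

noncomputable def zeta (t s : ℝ) : ℝ := s + (1 - t) * Real.log (1 - s)
noncomputable def xi (s t : ℝ) : ℝ := zeta t t - zeta t s
noncomputable def rho (a b c : ℝ) : ℝ := if a < 1 then xi a b / xi a c else (1 - b) / (1 - c)

lemma xi_eq (a t : ℝ) :
    xi a t = t + (1 - t) * Real.log (1 - t) - a - (1 - t) * Real.log (1 - a) := by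
  simp only [xi, zeta]; ring

lemma xi_self (a : ℝ) : xi a a = 0 := sub_self _

lemma xi_cont (a : ℝ) : Continuous (fun t : ℝ => xi a t) := by
  simp only [xi_eq]
  have h1 : Continuous (fun t : ℝ => (1 - t) * Real.log (1 - t)) :=
    Real.continuous_mul_log.comp (continuous_const.sub continuous_id)
  exact ((continuous_id.add h1).sub continuous_const).sub
    ((continuous_const.sub continuous_id).mul continuous_const)

lemma xi_hasDeriv (a t : ℝ) (ht : t < 1) :
    HasDerivAt (fun s => xi a s) (Real.log (1 - a) - Real.log (1 - t)) t := by
  have h0 : (1 : ℝ) - t ≠ 0 := by linarith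
  have h1 : HasDerivAt (fun s : ℝ => 1 - s) (-1) t := (hasDerivAt_id t).const_sub 1
  have hB : HasDerivAt (fun s : ℝ => (1 - s) * Real.log (1 - s))
      ((Real.log (1 - t) + 1) * (-1)) t := (Real.hasDerivAt_mul_log h0).comp t h1
  have hC : HasDerivAt (fun s : ℝ => (1 - s) * Real.log (1 - a))
      ((-1) * Real.log (1 - a)) t := h1.mul_const _
  have := (((hasDerivAt_id t).add hB).sub_const a).sub hC
  simp only [xi_eq]
  exact this.congr_deriv (by ring)

lemma xi_strictMonoOn (a : ℝ) (ha : a < 1) :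
    StrictMonoOn (fun t => xi a t) (Set.Icc a 1) := by
  apply strictMonoOn_of_deriv_pos (convex_Icc a 1) ((xi_cont a).continuousOn)
  intro x hx
  rw [interior_Icc] at hx
  rw [(xi_hasDeriv a x hx.2).deriv]
  have : Real.log (1 - x) < Real.log (1 - a) :=
    Real.log_lt_log (by linarith [hx.2]) (by linarith [hx.1])
  linarith

lemma xi_strictAntiOn (a : ℝ) (ha : a < 1) :
    StrictAntiOn (fun t => xi a t) (Set.Icc 0 a) := by
  apply strictAntiOn_of_deriv_neg (convex_Icc 0 a) ((xi_cont a).continuousOn)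
  intro x hx
  rw [interior_Icc] at hx
  rw [(xi_hasDeriv a x (by linarith [hx.2])).deriv]
  have : Real.log (1 - a) < Real.log (1 - x) :=
    Real.log_lt_log (by linarith) (by linarith [hx.2])
  linarith

lemma xi_pos (a c : ℝ) (ha : 0 ≤ a) (ha1 : a < 1) (hc : 0 ≤ c) (hc1 : c < 1)
    (hac : a ≠ c) : 0 < xi a c := by
  rcases lt_or_gt_of_ne hac with h | h
  · have := xi_strictMonoOn a ha1 (Set.mem_Icc.2 ⟨le_refl a, ha1.le⟩)
      (Set.mem_Icc.2 ⟨h.le, hc1.le⟩) h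
    simpa [xi_self] using this
  · have := xi_strictAntiOn a ha1 (Set.mem_Icc.2 ⟨hc, h.le⟩)
      (Set.mem_Icc.2 ⟨ha, le_refl a⟩) h
    simpa [xi_self] using this

theorem stmt8 (a c : ℝ) (ha : 0 ≤ a) (ha1 : a ≤ 1) (hc : 0 ≤ c) (hc1 : c < 1)
    (hac : a ≠ c) :
    rho a c c = 1 ∧
    rho a a c = 0 ∧
    ContinuousOn (fun t => rho a t c) (Set.Icc 0 1) ∧
    StrictAntiOn (fun t => rho a t c) (Set.Ioo 0 a) ∧
    StrictMonoOn (fun t => rho a t c) (Set.Ioo a 1) := by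
  rcases lt_or_eq_of_le ha1 with hlt | heq
  · have hK : 0 < xi a c := xi_pos a c ha hlt hc hc1 hac
    simp only [rho, if_pos hlt]
    refine ⟨div_self hK.ne', by simp [xi_self], ?_, ?_, ?_⟩
    · exact ((xi_cont a).div_const _).continuousOn
    · intro x hx y hy hxy
      have hxv : xi a y < xi a x :=
        xi_strictAntiOn a hlt ⟨hx.1.le, hx.2.le⟩ ⟨hy.1.le, hy.2.le⟩ hxy
      dsimp only
      gcongr
    · intro x hx y hy hxy
      have hxv : xi a x < xi a y :=
        xi_strictMonoOn a hlt ⟨hx.1.le, hx.2.le⟩ ⟨hy.1.le, hy.2.le⟩ hxy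
      dsimp only
      gcongr
  · subst heq
    simp only [rho, if_neg (lt_irrefl (1:ℝ))]
    have h1c : (0:ℝ) < 1 - c := by linarith
    refine ⟨div_self h1c.ne', by simp, ?_, ?_, ?_⟩
    · exact ((continuous_const.sub continuous_id).div_const _).continuousOn
    · intro x hx y hy hxy
      have : (1:ℝ) - y < 1 - x := by linarith
      dsimp only
      gcongr
    · intro x hx
      exact absurd hx (by simp)
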